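/- Let L*_T denote the minimum over all T-step partitions {S_i} of Y of the error bound L_T({S_i}) = Σ_i E_{S_{<i}}[C(S_i|X,S_{<i})]. Then L*_T is monotonically decreasing in T: L*_T ≥ L*_{T+1} for all 1 ≤ T < |Y|. -/

import Mathlib

open Finset Filter

/-- Shannon entropy (base 2) of a distribution on a finite type. -/
noncomputable def H2 {β : Type*} [Fintype β] (p : β → ℝ) : ℝ :=
  -∑ b, p b * Real.logb 2 (p b)

/-- KL divergence (base 2) between two distributions on a finite type. -/
noncomputable def KL2 {β : Type*} [Fintype β] (p q : β → ℝ) : ℝ :=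
  ∑ b, p b * Real.logb 2 (p b / q b)

/-- `p` is a probability mass function on a finite type. -/
def IsPMF {β : Type*} [Fintype β] (p : β → ℝ) : Prop :=
  (∀ b, 0 ≤ p b) ∧ ∑ b, p b = 1

/-- Entropy of the random variable `f` on the finite probability space `(Ω, p)`. -/
noncomputable def entOf {Ω γ : Type*} [Fintype Ω] [Fintype γ] [DecidableEq γ]
    (p : Ω → ℝ) (f : Ω → γ) : ℝ :=
  H2 (fun g => ∑ ω, if f ω = g then p ω else 0)

/-- Conditional total correlation `C((f i)_i | g)` of the family of random variables `f`
given the random variable `g`, on the finite probability space `(Ω, p)`: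
`∑ i H(f i | g) - H((f i)_i | g)`, each conditional entropy written as
`H(·, g) - H(g)`. -/
noncomputable def Cof {Ω ι β γ : Type*}
    [Fintype Ω] [Fintype ι] [DecidableEq ι] [Fintype β] [DecidableEq β]
    [Fintype γ] [DecidableEq γ]
    (p : Ω → ℝ) (f : ι → Ω → β) (g : Ω → γ) : ℝ :=
  (∑ i, (entOf p (fun ω => (f i ω, g ω)) - entOf p g))
    - (entOf p (fun ω => ((fun i => f i ω), g ω)) - entOf p g)

/-- The lower bound `L_T({S_i}) = ∑ i E_{S_{<i}}[C(S_i | X, S_{<i})]` associated with the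
ordered `T`-step partition of the variables `(y j)_{j : ι}` given by the block assignment
`blk : ι → Fin T`, conditioning at step `i` on the input `X` and the earlier blocks. -/
noncomputable def LTbound {Ω ξ β ι : Type*} [Fintype Ω] [Fintype ξ] [DecidableEq ξ]
    [Fintype β] [DecidableEq β] [Fintype ι] [DecidableEq ι]
    (p : Ω → ℝ) (X : Ω → ξ) (y : ι → Ω → β) (T : ℕ) (blk : ι → Fin T) : ℝ :=
  ∑ i : Fin T, Cof p (fun j : {j // blk j = i} => y j.1)
      (fun ω => (X ω, fun j : {j // blk j < i} => y j.1 ω))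

section Aux

variable {Ω : Type*} [Fintype Ω] (p : Ω → ℝ)

/-- pushforward distribution -/
noncomputable def pdist {γ : Type*} [Fintype γ] [DecidableEq γ]
    (g : Ω → γ) (c : γ) : ℝ :=
  ∑ ω, if g ω = c then p ω else 0

variable {γ δ : Type*} [Fintype γ] [DecidableEq γ] [Fintype δ] [DecidableEq δ]

lemma entOf_eq (g : Ω → γ) :
    entOf p g = -∑ c, pdist p g c * Real.logb 2 (pdist p g c) := rfl

lemma pdist_nonneg (hp : ∀ ω, 0 ≤ p ω) (g : Ω → γ) (c : γ) : 0 ≤ pdist p g c :=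
  Finset.sum_nonneg fun ω _ => by split <;> simp [hp ω]

lemma sum_pdist (g : Ω → γ) : ∑ c, pdist p g c = ∑ ω, p ω := by
  simp only [pdist]
  rw [Finset.sum_comm]
  exact Finset.sum_congr rfl fun ω _ => by simp

lemma pdist_comp (g : Ω → γ) (π : γ → δ) (d : δ) :
    pdist p (fun ω => π (g ω)) d = ∑ c, if π c = d then pdist p g c else 0 := by
  have : ∀ c : γ, (if π c = d then pdist p g c else 0)
      = ∑ ω, if g ω = c then (if π c = d then p ω else 0) else 0 := by
    intro c
    by_cases h : π c = d <;> simp [h, pdist]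
  rw [Finset.sum_congr rfl fun c _ => this c, Finset.sum_comm]
  refine Finset.sum_congr rfl fun ω _ => ?_
  have : ∀ c : γ, (if g ω = c then (if π c = d then p ω else 0) else 0)
      = if g ω = c then (if π (g ω) = d then p ω else 0) else 0 := by
    intro c; by_cases h : g ω = c <;> simp [h]
  rw [Finset.sum_congr rfl fun c _ => this c,
    Finset.sum_ite_eq univ (g ω) (fun _ => if π (g ω) = d then p ω else 0)]
  simp

lemma pdist_le_comp (hp : ∀ ω, 0 ≤ p ω) (g : Ω → γ) (π : γ → δ) (c : γ) :
    pdist p g c ≤ pdist p (fun ω => π (g ω)) (π c) := by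
  rw [pdist_comp p g π (π c)]
  have := Finset.single_le_sum (f := fun c' => if π c' = π c then pdist p g c' else 0)
    (fun c' _ => by split <;> simp [pdist_nonneg p hp g c']) (Finset.mem_univ c)
  simpa using this

lemma sum_pdist_mul (g : Ω → γ) (π : γ → δ) (φ : δ → ℝ) :
    ∑ c, pdist p g c * φ (π c) = ∑ d, pdist p (fun ω => π (g ω)) d * φ d := by
  have : ∀ d : δ, pdist p (fun ω => π (g ω)) d * φ d
      = ∑ c, if π c = d then pdist p g c * φ d else 0 := by
    intro d
    rw [pdist_comp, Finset.sum_mul]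
    exact Finset.sum_congr rfl fun c _ => by split <;> simp
  rw [Finset.sum_congr rfl fun d _ => this d, Finset.sum_comm]
  refine Finset.sum_congr rfl fun c _ => ?_
  have : ∀ d : δ, (if π c = d then pdist p g c * φ d else 0)
      = if π c = d then pdist p g c * φ (π c) else 0 := by
    intro d; by_cases h : π c = d <;> simp [h]
  rw [Finset.sum_congr rfl fun d _ => this d,
    Finset.sum_ite_eq univ (π c) (fun _ => pdist p g c * φ (π c))]
  simp

lemma pdist_fst_marg (r : Ω → γ) (s : Ω → δ) (d : δ) :
    ∑ c, pdist p (fun ω => (r ω, s ω)) (c, d) = pdist p s d := by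
  simp only [pdist]
  rw [Finset.sum_comm]
  refine Finset.sum_congr rfl fun ω _ => ?_
  have : ∀ c : γ, (if (r ω, s ω) = (c, d) then p ω else 0)
      = if r ω = c then (if s ω = d then p ω else 0) else 0 := by
    intro c
    by_cases h1 : r ω = c <;> by_cases h2 : s ω = d <;> simp [Prod.ext_iff, h1, h2]
  rw [Finset.sum_congr rfl fun c _ => this c,
    Finset.sum_ite_eq univ (r ω) (fun _ => if s ω = d then p ω else 0)]
  simp

end Aux
section Gibbs

open Finset

lemma gibbs {W : Type*} [Fintype W] (P Q : W → ℝ) (hP : ∀ w, 0 ≤ P w)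
    (hQ : ∀ w, 0 ≤ Q w) (hsupp : ∀ w, P w ≠ 0 → Q w ≠ 0)
    (hPQ : ∑ w, Q w ≤ ∑ w, P w) :
    0 ≤ ∑ w, P w * Real.logb 2 (P w / Q w) := by
  have key : ∀ w, P w * Real.log (Q w / P w) ≤ Q w - P w := by
    intro w
    rcases eq_or_lt_of_le (hP w) with h | h
    · simp [← h, hQ w]
    · have hq : 0 < Q w := lt_of_le_of_ne (hQ w) (Ne.symm (hsupp w (ne_of_gt h)))
      have hdiv : 0 < Q w / P w := div_pos hq h
      have h1 := Real.log_le_sub_one_of_pos hdiv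
      have h2 : P w * Real.log (Q w / P w) ≤ P w * (Q w / P w - 1) :=
        mul_le_mul_of_nonneg_left h1 (le_of_lt h)
      calc P w * Real.log (Q w / P w) ≤ P w * (Q w / P w - 1) := h2
        _ = Q w - P w := by field_simp
  have hsum : ∑ w, P w * Real.log (Q w / P w) ≤ 0 := by
    calc ∑ w, P w * Real.log (Q w / P w) ≤ ∑ w, (Q w - P w) :=
          Finset.sum_le_sum fun w _ => key w
      _ = ∑ w, Q w - ∑ w, P w := Finset.sum_sub_distrib _ _
      _ ≤ 0 := by linarith
  have hflip : ∀ w, P w * Real.log (P w / Q w) = -(P w * Real.log (Q w / P w)) := by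
    intro w
    rcases eq_or_ne (P w) 0 with h | h
    · simp [h]
    · have : P w / Q w = (Q w / P w)⁻¹ := by rw [inv_div]
      rw [this, Real.log_inv]; ring
  have hlog : 0 ≤ ∑ w, P w * Real.log (P w / Q w) := by
    rw [Finset.sum_congr rfl fun w _ => hflip w, Finset.sum_neg_distrib]
    linarith
  have hdiv2 : ∑ w, P w * Real.logb 2 (P w / Q w)
      = (∑ w, P w * Real.log (P w / Q w)) / Real.log 2 := by
    rw [Finset.sum_div]
    exact Finset.sum_congr rfl fun w _ => by rw [Real.logb]; ring
  rw [hdiv2]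
  positivity

end Gibbs

section Submod

open Finset

variable {Ω : Type*} [Fintype Ω] {p : Ω → ℝ}
variable {U A Z : Type*} [Fintype U] [DecidableEq U] [Fintype A] [DecidableEq A]
  [Fintype Z] [DecidableEq Z]

/-- Submodularity of entropy: `H(Z) + H(U,A,Z) ≤ H(U,Z) + H(A,Z)`. -/
lemma entOf_submod (hp : IsPMF p) (u : Ω → U) (a : Ω → A) (z : Ω → Z) :
    entOf p z + entOf p (fun ω => (u ω, a ω, z ω)) ≤
      entOf p (fun ω => (u ω, z ω)) + entOf p (fun ω => (a ω, z ω)) := by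
  classical
  set t : Ω → U × A × Z := fun ω => (u ω, a ω, z ω) with ht
  set P : U × A × Z → ℝ := pdist p t with hPdef
  have hPnn : ∀ w, 0 ≤ P w := pdist_nonneg p hp.1 t
  have hPsum : ∑ w, P w = 1 := by rw [hPdef, sum_pdist]; exact hp.2
  set πuz : U × A × Z → U × Z := fun w => (w.1, w.2.2) with hπuz
  set πaz : U × A × Z → A × Z := fun w => w.2 with hπaz
  set πz : U × A × Z → Z := fun w => w.2.2 with hπz
  have huz : pdist p (fun ω => πuz (t ω)) = pdist p (fun ω => (u ω, z ω)) := rfl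
  have haz : pdist p (fun ω => πaz (t ω)) = pdist p (fun ω => (a ω, z ω)) := rfl
  have hz : pdist p (fun ω => πz (t ω)) = pdist p z := rfl
  set Puz : U × Z → ℝ := pdist p (fun ω => (u ω, z ω)) with hPuz
  set Paz : A × Z → ℝ := pdist p (fun ω => (a ω, z ω)) with hPaz
  set Pz : Z → ℝ := pdist p z with hPz
  have hPuznn : ∀ w, 0 ≤ Puz w := pdist_nonneg p hp.1 _
  have hPaznn : ∀ w, 0 ≤ Paz w := pdist_nonneg p hp.1 _
  have hPznn : ∀ w, 0 ≤ Pz w := pdist_nonneg p hp.1 _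
  have hle_uz : ∀ w, P w ≤ Puz (πuz w) := fun w => pdist_le_comp p hp.1 t πuz w
  have hle_az : ∀ w, P w ≤ Paz (πaz w) := fun w => pdist_le_comp p hp.1 t πaz w
  have hle_z : ∀ w, P w ≤ Pz (πz w) := fun w => pdist_le_comp p hp.1 t πz w
  have hmarg_u : ∀ z0, ∑ u0, Puz (u0, z0) = Pz z0 := fun z0 => pdist_fst_marg p u z z0
  have hmarg_a : ∀ z0, ∑ a0, Paz (a0, z0) = Pz z0 := fun z0 => pdist_fst_marg p a z z0
  set Q : U × A × Z → ℝ := fun w =>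
    if Pz (πz w) = 0 then 0 else Puz (πuz w) * Paz (πaz w) / Pz (πz w) with hQdef
  have hQnn : ∀ w, 0 ≤ Q w := by
    intro w; rw [hQdef]; dsimp only
    split
    · exact le_rfl
    · have h1 := hPuznn (πuz w); have h2 := hPaznn (πaz w); have h3 := hPznn (πz w)
      positivity
  have hQsupp : ∀ w, P w ≠ 0 → Q w ≠ 0 := by
    intro w hw
    have hPw : 0 < P w := lt_of_le_of_ne (hPnn w) (Ne.symm hw)
    have h1 : 0 < Puz (πuz w) := lt_of_lt_of_le hPw (hle_uz w)
    have h2 : 0 < Paz (πaz w) := lt_of_lt_of_le hPw (hle_az w)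
    have h3 : 0 < Pz (πz w) := lt_of_lt_of_le hPw (hle_z w)
    rw [hQdef]; dsimp only
    rw [if_neg (ne_of_gt h3)]
    positivity
  have hQsum : ∑ w, Q w ≤ 1 := by
    have step1 : ∑ w : U × A × Z, Q w = ∑ z0, ∑ u0, ∑ a0, Q (u0, a0, z0) := by
      calc ∑ w : U × A × Z, Q w = ∑ u0, ∑ a0, ∑ z0, Q (u0, a0, z0) := by
            rw [Fintype.sum_prod_type]
            exact Finset.sum_congr rfl fun u0 _ => Fintype.sum_prod_type _
        _ = ∑ u0, ∑ z0, ∑ a0, Q (u0, a0, z0) :=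
            Finset.sum_congr rfl fun _ _ => Finset.sum_comm
        _ = ∑ z0, ∑ u0, ∑ a0, Q (u0, a0, z0) := Finset.sum_comm
    rw [step1]
    have hinner : ∀ z0, ∑ u0, ∑ a0, Q (u0, a0, z0) ≤ Pz z0 := by
      intro z0
      by_cases hz0 : Pz z0 = 0
      · have : ∀ u0 a0, Q (u0, a0, z0) = 0 := by
          intro u0 a0; rw [hQdef]; dsimp only; rw [if_pos hz0]
        simp only [this, Finset.sum_const_zero]
        exact hPznn z0
      · have hQeq : ∀ u0 a0, Q (u0, a0, z0) = Puz (u0, z0) * Paz (a0, z0) / Pz z0 := by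
          intro u0 a0; rw [hQdef]; dsimp only; rw [if_neg hz0]
        have hrow : ∀ u0, ∑ a0, Q (u0, a0, z0) = Puz (u0, z0) := by
          intro u0
          calc ∑ a0, Q (u0, a0, z0)
              = ∑ a0, Puz (u0, z0) / Pz z0 * Paz (a0, z0) :=
                Finset.sum_congr rfl fun a0 _ => by rw [hQeq]; ring
            _ = Puz (u0, z0) / Pz z0 * ∑ a0, Paz (a0, z0) := (Finset.mul_sum _ _ _).symm
            _ = Puz (u0, z0) := by rw [hmarg_a z0]; field_simp
        rw [Finset.sum_congr rfl fun u0 _ => hrow u0, hmarg_u z0]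
    calc ∑ z0, ∑ u0, ∑ a0, Q (u0, a0, z0) ≤ ∑ z0, Pz z0 :=
          Finset.sum_le_sum fun z0 _ => hinner z0
      _ = 1 := by rw [hPz, sum_pdist]; exact hp.2
  have hpoint : ∀ w, P w * Real.logb 2 (P w / Q w)
      = P w * Real.logb 2 (P w) - P w * Real.logb 2 (Puz (πuz w))
        - P w * Real.logb 2 (Paz (πaz w)) + P w * Real.logb 2 (Pz (πz w)) := by
    intro w
    rcases eq_or_ne (P w) 0 with h | h
    · simp [h]
    · have hPw : 0 < P w := lt_of_le_of_ne (hPnn w) (Ne.symm h)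
      have h1 : 0 < Puz (πuz w) := lt_of_lt_of_le hPw (hle_uz w)
      have h2 : 0 < Paz (πaz w) := lt_of_lt_of_le hPw (hle_az w)
      have h3 : 0 < Pz (πz w) := lt_of_lt_of_le hPw (hle_z w)
      have hQw : Q w = Puz (πuz w) * Paz (πaz w) / Pz (πz w) := by
        rw [hQdef]; dsimp only; rw [if_neg (ne_of_gt h3)]
      rw [hQw, div_div_eq_mul_div,
        Real.logb_div (by positivity) (by positivity),
        Real.logb_mul (ne_of_gt hPw) (ne_of_gt h3),
        Real.logb_mul (ne_of_gt h1) (ne_of_gt h2)]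
      ring
  have hD := gibbs P Q hPnn hQnn hQsupp (by rw [hPsum]; exact hQsum)
  have e1 : ∑ w, P w * Real.logb 2 (Puz (πuz w)) = ∑ d, Puz d * Real.logb 2 (Puz d) := by
    exact sum_pdist_mul p t πuz (fun d => Real.logb 2 (Puz d))
  have e2 : ∑ w, P w * Real.logb 2 (Paz (πaz w)) = ∑ d, Paz d * Real.logb 2 (Paz d) := by
    exact sum_pdist_mul p t πaz (fun d => Real.logb 2 (Paz d))
  have e3 : ∑ w, P w * Real.logb 2 (Pz (πz w)) = ∑ d, Pz d * Real.logb 2 (Pz d) := by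
    exact sum_pdist_mul p t πz (fun d => Real.logb 2 (Pz d))
  have hsplit : ∑ w, P w * Real.logb 2 (P w / Q w)
      = (∑ w, P w * Real.logb 2 (P w)) - (∑ d, Puz d * Real.logb 2 (Puz d))
        - (∑ d, Paz d * Real.logb 2 (Paz d)) + (∑ d, Pz d * Real.logb 2 (Pz d)) := by
    rw [Finset.sum_congr rfl fun w _ => hpoint w]
    rw [Finset.sum_add_distrib, Finset.sum_sub_distrib, Finset.sum_sub_distrib,
      e1, e2, e3]

  rw [entOf_eq p z, entOf_eq p t, entOf_eq p (fun ω => (u ω, z ω)),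
    entOf_eq p (fun ω => (a ω, z ω)), ← hPz, ← hPdef, ← hPuz, ← hPaz]
  linarith [hD, hsplit]

end Submod
section Congr

open Finset Function

variable {Ω : Type*} [Fintype Ω] (p : Ω → ℝ)
variable {γ δ : Type*} [Fintype γ] [DecidableEq γ] [Fintype δ] [DecidableEq δ]

lemma entOf_comp (g : Ω → γ) (θ : γ → δ) (hθ : Injective θ) :
    entOf p (fun ω => θ (g ω)) = entOf p g := by
  classical
  have hinj : pdist p (fun ω => θ (g ω)) ∘ θ = pdist p g := by
    funext c
    simp only [comp_apply, pdist]
    exact Finset.sum_congr rfl fun ω _ => by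
      by_cases h : g ω = c
      · rw [if_pos h, if_pos (by rw [h])]
      · rw [if_neg h, if_neg (fun hc => h (hθ hc))]
  have hzero : ∀ d : δ, d ∉ Finset.univ.image θ → pdist p (fun ω => θ (g ω)) d = 0 := by
    intro d hd
    rw [pdist]
    refine Finset.sum_eq_zero fun ω _ => ?_
    rw [if_neg]
    intro hc
    exact hd (Finset.mem_image.2 ⟨g ω, Finset.mem_univ _, hc⟩)
  rw [entOf_eq, entOf_eq]
  congr 1
  rw [← Finset.sum_subset (Finset.subset_univ (Finset.univ.image θ))
      (fun d _ hd => by rw [hzero d hd]; simp)]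
  rw [Finset.sum_image (fun c _ c' _ h => hθ h)]
  refine Finset.sum_congr rfl fun c _ => ?_
  rw [show pdist p (fun ω => θ (g ω)) (θ c) = pdist p g c from congrFun hinj c]

set_option maxHeartbeats 1600000 in
lemma Cof_congr {ι ι' β : Type*} [Fintype ι] [DecidableEq ι] [Fintype ι'] [DecidableEq ι']
    [Fintype β] [DecidableEq β]
    (f : ι → Ω → β) (g : Ω → γ) (e : ι' ≃ ι) (θ : γ → δ) (hθ : Injective θ) :
    Cof p (fun i' => f (e i')) (fun ω => θ (g ω)) = Cof p f g := by
  classical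
  have h1 : entOf p (fun ω => θ (g ω)) = entOf p g := entOf_comp p g θ hθ
  have h2 : ∀ i : ι, entOf p (fun ω => (f i ω, θ (g ω))) = entOf p (fun ω => (f i ω, g ω)) := by
    intro i
    exact entOf_comp p (fun ω => (f i ω, g ω)) (Prod.map id θ)
      (by
        intro x y heq
        rw [Prod.ext_iff] at heq
        obtain ⟨hfst, hsnd⟩ := heq
        simp only [Prod.map_fst, Prod.map_snd, id_eq] at hfst hsnd
        exact Prod.ext hfst (hθ hsnd))
  have h3 : entOf p (fun ω => ((fun i' => f (e i') ω), θ (g ω)))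
      = entOf p (fun ω => ((fun i => f i ω), g ω)) := by
    have hinj : Injective (fun hc : (ι → β) × γ => ((fun i' => hc.1 (e i'), θ hc.2) : (ι' → β) × δ)) := by
      intro ⟨a1, c1⟩ ⟨a2, c2⟩ heq
      simp only [Prod.mk.injEq] at heq ⊢
      refine ⟨funext fun i => ?_, hθ heq.2⟩
      have := congrFun heq.1 (e.symm i)
      simpa using this
    exact entOf_comp p (fun ω => ((fun i => f i ω), g ω))
      (fun hc => (fun i' => hc.1 (e i'), θ hc.2)) hinj
  rw [Cof, Cof, h1, h3]
  congr 1
  rw [← Equiv.sum_comp e (fun i => entOf p (fun ω => (f i ω, g ω)) - entOf p g)]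
  exact Finset.sum_congr rfl fun i' _ => by rw [h2 (e i')]

set_option maxHeartbeats 1600000 in
lemma Cof_unique {ι β : Type*} [Fintype ι] [DecidableEq ι] [Fintype β] [DecidableEq β]
    (f : ι → Ω → β) (g : Ω → γ) (i0 : ι) (h : ∀ i, i = i0) :
    Cof p f g = 0 := by
  classical
  have huniv : (Finset.univ : Finset ι) = {i0} := by
    ext i; simp [h i]
  have hinj : Function.Injective (fun bc : β × γ => (((fun _ => bc.1) : ι → β), bc.2)) := by
    intro x y heq
    rw [Prod.ext_iff] at heq
    obtain ⟨hfst, hsnd⟩ := heq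
    dsimp only at hfst hsnd
    exact Prod.ext (congrFun hfst i0) hsnd
  have hfun : (fun ω => ((fun i => f i ω), g ω))
      = (fun ω => (((fun _ : ι => f i0 ω) : ι → β), g ω)) := by
    funext ω
    exact congrArg (fun h' => (h', g ω)) (funext fun i => by rw [h i])
  have hjoint : entOf p (fun ω => ((fun i => f i ω), g ω))
      = entOf p (fun ω => (f i0 ω, g ω)) := by
    rw [hfun]
    exact entOf_comp p (fun ω => (f i0 ω, g ω))
      (fun bc => (((fun _ => bc.1) : ι → β), bc.2)) hinj
  rw [Cof, huniv, Finset.sum_singleton, hjoint]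
  ring

end Congr
section Erase

open Finset Function

set_option maxHeartbeats 1000000 in
lemma Cof_erase {Ω ι β γ : Type*} [Fintype Ω] [Fintype ι] [DecidableEq ι]
    [Fintype β] [DecidableEq β] [Fintype γ] [DecidableEq γ]
    (p : Ω → ℝ) (hp : IsPMF p) (y : ι → Ω → β) (P : ι → Prop) [DecidablePred P]
    (j0 : ι) (hj0 : P j0) (g : Ω → γ) :
    Cof p (fun j : {j // P j ∧ j ≠ j0} => y j.1) g
      ≤ Cof p (fun j : {j // P j} => y j.1) g := by
  classical
  have hsub := entOf_submod hp (y j0)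
    (fun ω => fun j : {j // P j ∧ j ≠ j0} => y j.1 ω) g
  -- recode the joint entropy of the full block
  have hinj : Injective (fun hc : ({j // P j} → β) × γ =>
      ((hc.1 ⟨j0, hj0⟩, fun j : {j // P j ∧ j ≠ j0} => hc.1 ⟨j.1, j.2.1⟩, hc.2) :
        β × ({j // P j ∧ j ≠ j0} → β) × γ)) := by
    intro x x' heq
    rw [Prod.ext_iff] at heq
    obtain ⟨h1, h23⟩ := heq
    rw [Prod.ext_iff] at h23
    obtain ⟨h2, h3⟩ := h23
    dsimp only at h1 h2 h3
    refine Prod.ext (funext fun j => ?_) h3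
    by_cases hj : j.1 = j0
    · have : j = ⟨j0, hj0⟩ := Subtype.ext hj
      rw [this]; exact h1
    · exact congrFun h2 ⟨j.1, ⟨j.2, hj⟩⟩
  have hrec : entOf p (fun ω => ((fun j : {j // P j} => y j.1 ω), g ω))
      = entOf p (fun ω => (y j0 ω, (fun j : {j // P j ∧ j ≠ j0} => y j.1 ω), g ω)) := by
    exact (entOf_comp p (fun ω => ((fun j : {j // P j} => y j.1 ω), g ω))
      (fun hc => (hc.1 ⟨j0, hj0⟩, fun j : {j // P j ∧ j ≠ j0} => hc.1 ⟨j.1, j.2.1⟩, hc.2))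
      hinj).symm
  -- split the sum over the full block
  have hsplit : ∑ j : {j // P j}, (entOf p (fun ω => (y j.1 ω, g ω)) - entOf p g)
      = (entOf p (fun ω => (y j0 ω, g ω)) - entOf p g)
        + ∑ j : {j // P j ∧ j ≠ j0}, (entOf p (fun ω => (y j.1 ω, g ω)) - entOf p g) := by
    set t : ι → ℝ := fun j => entOf p (fun ω => (y j ω, g ω)) - entOf p g with htdef
    have e1 : ∑ j ∈ Finset.univ.filter P, t j = ∑ j : {j // P j}, t j.1 :=
      Finset.sum_subtype _ (by simp) t
    have e2 : ∑ j ∈ (Finset.univ.filter P).erase j0, t j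
        = ∑ j : {j // P j ∧ j ≠ j0}, t j.1 :=
      Finset.sum_subtype _ (fun x => by simp [Finset.mem_erase, and_comm]) t
    have e3 : t j0 + ∑ j ∈ (Finset.univ.filter P).erase j0, t j
        = ∑ j ∈ Finset.univ.filter P, t j :=
      Finset.add_sum_erase _ t (by simp [hj0])
    rw [← e1, ← e2, ← e3]
  simp only [Cof]
  linarith [hsub, hrec, hsplit]

end Erase
section Step

open Finset Function

/-- Transport of a subtype along a pointwise iff, with definitionally transparent coercion. -/
def reEquiv {ι : Type*} {P Q : ι → Prop} (h : ∀ j, P j ↔ Q j) : {j // P j} ≃ {j // Q j} :=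
  ⟨fun j => ⟨j.1, (h j.1).1 j.2⟩, fun j => ⟨j.1, (h j.1).2 j.2⟩,
    fun _ => rfl, fun _ => rfl⟩

set_option maxHeartbeats 2000000 in
lemma LT_step {Ω ξ β ι : Type*} [Fintype Ω] [Fintype ξ] [DecidableEq ξ]
    [Fintype β] [DecidableEq β] [Fintype ι] [DecidableEq ι]
    (p : Ω → ℝ) (hp : IsPMF p) (X : Ω → ξ) (y : ι → Ω → β)
    (T : ℕ) (blk : ι → Fin T) (hsurj : Surjective blk) (hT : T < Fintype.card ι) :
    ∃ blk' : ι → Fin (T + 1), Surjective blk' ∧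
      LTbound p X y (T + 1) blk' ≤ LTbound p X y T blk := by
  classical
  obtain ⟨j0, j1, hne01, heq01⟩ := Fintype.exists_ne_map_eq_of_card_lt blk
    (by simpa using hT)
  set k : Fin T := blk j0 with hk
  set emb : Fin T → Fin (T + 1) :=
    fun i => if (i : ℕ) ≤ (k : ℕ) then i.castSucc else i.succ with hemb
  set ks : Fin (T + 1) := k.succ with hks
  set blk' : ι → Fin (T + 1) := fun j => if j = j0 then ks else emb (blk j) with hblk'
  have hembval : ∀ i : Fin T,
      ((emb i : Fin (T + 1)) : ℕ) = if (i : ℕ) ≤ (k : ℕ) then (i : ℕ) else (i : ℕ) + 1 := by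
    intro i; rw [hemb]; dsimp only; split <;> simp
  have hksval : ((ks : Fin (T + 1)) : ℕ) = (k : ℕ) + 1 := rfl
  have hbval : ∀ j, ((blk' j : Fin (T + 1)) : ℕ)
      = if j = j0 then (k : ℕ) + 1
        else (if (blk j : ℕ) ≤ (k : ℕ) then (blk j : ℕ) else (blk j : ℕ) + 1) := by
    intro j; rw [hblk']; dsimp only
    split
    · exact hksval
    · exact hembval (blk j)
  -- key characterizations
  have key1 : ∀ j (i : Fin T), blk' j = emb i ↔ (j ≠ j0 ∧ blk j = i) := by
    intro j i
    rw [Fin.ext_iff, hbval, hembval]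
    by_cases hj : j = j0
    · subst hj
      simp only [if_pos rfl, ne_eq, not_true_eq_false, false_and, iff_false]
      have hi := i.isLt
      intro hcontra
      split_ifs at hcontra <;> omega
    · rw [if_neg hj]
      simp only [ne_eq, hj, not_false_eq_true, true_and]
      rw [Fin.ext_iff]
      split_ifs <;> omega
  have key2 : ∀ j, blk' j = ks ↔ j = j0 := by
    intro j
    constructor
    · intro h
      by_contra hj
      have hv2 : ((blk' j : Fin (T + 1)) : ℕ) = (k : ℕ) + 1 := by rw [h, hksval]
      rw [hbval, if_neg hj] at hv2
      have := (blk j).isLt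
      split_ifs at hv2 <;> omega
    · intro h; rw [hblk']; dsimp only; rw [if_pos h]
  have key3 : ∀ j (i : Fin T), blk' j < emb i ↔ blk j < i := by
    intro j i
    rw [Fin.lt_def, Fin.lt_def, hbval, hembval]
    by_cases hj : j = j0
    · have hbj : blk j = k := by rw [hj, ← hk]
      rw [hbj]
      simp only [if_pos hj]
      split_ifs <;> omega
    · simp only [if_neg hj]
      split_ifs <;> omega
  have hembinj : Injective emb := by
    intro i i' h
    rw [Fin.ext_iff] at h ⊢
    rw [hembval, hembval] at h
    have := i.isLt; have := i'.isLt
    split_ifs at h <;> omega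
  have hembne : ∀ i, emb i ≠ ks := by
    intro i h
    rw [Fin.ext_iff, hembval, hksval] at h
    have := i.isLt
    split_ifs at h <;> omega
  have hcover : ∀ i' : Fin (T + 1), i' = ks ∨ ∃ i, emb i = i' := by
    intro i'
    by_cases h : (i' : ℕ) = (k : ℕ) + 1
    · exact Or.inl (Fin.ext (by rw [hksval, h]))
    · right
      by_cases h2 : (i' : ℕ) ≤ (k : ℕ)
      · refine ⟨⟨(i' : ℕ), lt_of_le_of_lt h2 k.isLt⟩, Fin.ext ?_⟩
        rw [hembval]; simp [h2]
      · have h3 : (k : ℕ) + 1 < (i' : ℕ) := by omega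
        have h4 : (i' : ℕ) - 1 < T := by have := i'.isLt; omega
        refine ⟨⟨(i' : ℕ) - 1, h4⟩, Fin.ext ?_⟩
        rw [hembval]
        simp only
        split_ifs <;> omega
  have hsum : ∀ F : Fin (T + 1) → ℝ, ∑ i', F i' = F ks + ∑ i : Fin T, F (emb i) := by
    intro F
    have huniv : (Finset.univ : Finset (Fin (T + 1)))
        = insert ks (Finset.univ.image emb) := by
      ext i'
      simp only [Finset.mem_univ, Finset.mem_insert, Finset.mem_image, true_iff]
      rcases hcover i' with h | ⟨i, hi⟩
      · exact Or.inl h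
      · exact Or.inr ⟨i, by simpa using hi⟩
    rw [huniv, Finset.sum_insert (by
      simp only [Finset.mem_image, Finset.mem_univ, true_and, not_exists]
      exact hembne),
      Finset.sum_image (fun a _ b _ h => hembinj h)]
  -- surjectivity
  have hsurj' : Surjective blk' := by
    intro i'
    rcases hcover i' with h | ⟨i, hi⟩
    · exact ⟨j0, by rw [(key2 j0).2 rfl, h]⟩
    · by_cases hik : i = k
      · refine ⟨j1, ?_⟩
        rw [(key1 j1 i).2 ⟨fun h' => hne01 h'.symm, heq01.symm.trans hik.symm⟩, hi]
      · obtain ⟨j, hj⟩ := hsurj i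
        refine ⟨j, ?_⟩
        rw [(key1 j i).2 ⟨fun h' => hik (by rw [← hj, h', ← hk]), hj⟩, hi]
  refine ⟨blk', hsurj', ?_⟩
  set F : Fin (T + 1) → ℝ := fun i' => Cof p (fun j : {j // blk' j = i'} => y j.1)
      (fun ω => (X ω, fun j : {j // blk' j < i'} => y j.1 ω)) with hF
  set G : Fin T → ℝ := fun i => Cof p (fun j : {j // blk j = i} => y j.1)
      (fun ω => (X ω, fun j : {j // blk j < i} => y j.1 ω)) with hG
  have h0 : F ks = 0 := by
    refine Cof_unique p _ _ ⟨j0, (key2 j0).2 rfl⟩ (fun jj => Subtype.ext ?_)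
    exact (key2 jj.1).1 jj.2
  have hle : ∀ i : Fin T, F (emb i) ≤ G i := by
    intro i
    set e2 : {j // blk' j < emb i} ≃ {j // blk j < i} := reEquiv (fun j => key3 j i) with he2
    set θi : ξ × ({j // blk j < i} → β) → ξ × ({j // blk' j < emb i} → β) :=
      fun xc => (xc.1, fun j' => xc.2 (e2 j')) with hθi
    have hθ : Injective θi := by
      intro x x' hxy
      rw [hθi, Prod.ext_iff] at hxy
      obtain ⟨h1, h2⟩ := hxy
      refine Prod.ext h1 (funext fun j => ?_)
      have h3 := congrFun h2 (e2.symm j)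
      simp only [Equiv.apply_symm_apply] at h3
      exact h3
    by_cases hik : i = k
    · -- the split block
      set e1 : {j // blk' j = emb i} ≃ {j // blk j = i ∧ j ≠ j0} :=
        reEquiv (fun j => (key1 j i).trans and_comm) with he1
      have hcof := Cof_congr p (fun j : {j // blk j = i ∧ j ≠ j0} => y j.1)
        (fun ω => (X ω, fun j : {j // blk j < i} => y j.1 ω)) e1 θi hθ
      have herase := Cof_erase p hp y (fun j => blk j = i) j0 (by rw [hik])
        (fun ω => (X ω, fun j : {j // blk j < i} => y j.1 ω))
      have t1 : (fun j' : {j // blk' j = emb i} => y j'.1)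
          = (fun j' => (fun j : {j // blk j = i ∧ j ≠ j0} => y j.1) (e1 j')) := rfl
      have t2 : (fun ω => (X ω, fun j : {j // blk' j < emb i} => y j.1 ω))
          = (fun ω => θi (X ω, fun j : {j // blk j < i} => y j.1 ω)) := rfl
      have t3 : F (emb i) = Cof p (fun j' : {j // blk' j = emb i} => y j'.1)
          (fun ω => (X ω, fun j : {j // blk' j < emb i} => y j.1 ω)) := rfl
      calc F (emb i)
          = Cof p (fun j' => (fun j : {j // blk j = i ∧ j ≠ j0} => y j.1) (e1 j'))
              (fun ω => θi (X ω, fun j : {j // blk j < i} => y j.1 ω)) := by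
            rw [t3, t1, t2]
        _ = Cof p (fun j : {j // blk j = i ∧ j ≠ j0} => y j.1)
              (fun ω => (X ω, fun j : {j // blk j < i} => y j.1 ω)) := hcof
        _ ≤ G i := herase
    · -- untouched blocks
      set e1 : {j // blk' j = emb i} ≃ {j // blk j = i} :=
        reEquiv (fun j => (key1 j i).trans
          ⟨And.right, fun h => ⟨fun hjj => hik (by rw [← h, hjj, ← hk]), h⟩⟩) with he1
      have hcof := Cof_congr p (fun j : {j // blk j = i} => y j.1)
        (fun ω => (X ω, fun j : {j // blk j < i} => y j.1 ω)) e1 θi hθ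
      refine le_of_eq ?_
      calc F (emb i)
          = Cof p (fun j' => (fun j : {j // blk j = i} => y j.1) (e1 j'))
              (fun ω => θi (X ω, fun j : {j // blk j < i} => y j.1 ω)) := rfl
        _ = G i := hcof
  calc LTbound p X y (T + 1) blk' = ∑ i', F i' := rfl
    _ = F ks + ∑ i : Fin T, F (emb i) := hsum F
    _ = ∑ i : Fin T, F (emb i) := by rw [h0, zero_add]
    _ ≤ ∑ i : Fin T, G i := Finset.sum_le_sum fun i _ => hle i
    _ = LTbound p X y T blk := rfl

end Step


/-- Let `L*_T` denote the minimum over all `T`-step ordered partitions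
(surjective block assignments `blk : ι → Fin T`) of `Y = (y j)_j` of the error bound
`L_T({S_i}) = ∑ i E_{S_{<i}}[C(S_i|X,S_{<i})]`. Then `L*_T` is monotonically decreasing
in `T`: `L*_T ≥ L*_{T+1}` for all `1 ≤ T < |Y|`. -/
theorem stmt_3 {Ω ξ β ι : Type*} [Fintype Ω] [Fintype ξ] [DecidableEq ξ]
    [Fintype β] [DecidableEq β] [Fintype ι] [DecidableEq ι]
    (p : Ω → ℝ) (hp : IsPMF p) (X : Ω → ξ) (y : ι → Ω → β)
    (T : ℕ) (hT1 : 1 ≤ T) (hT : T < Fintype.card ι) :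
    sInf {L : ℝ | ∃ blk : ι → Fin T, Function.Surjective blk ∧ L = LTbound p X y T blk}
      ≥ sInf {L : ℝ | ∃ blk : ι → Fin (T + 1),
          Function.Surjective blk ∧ L = LTbound p X y (T + 1) blk} := by
  classical
  have hne : Nonempty (Fin T) := ⟨⟨0, hT1⟩⟩
  have hAne : {L : ℝ | ∃ blk : ι → Fin T,
      Function.Surjective blk ∧ L = LTbound p X y T blk}.Nonempty := by
    obtain ⟨e⟩ := Function.Embedding.nonempty_of_card_le
      (α := Fin T) (β := ι) (by simpa using le_of_lt hT)
    exact ⟨LTbound p X y T (Function.invFun e),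
      ⟨Function.invFun e, Function.invFun_surjective e.injective, rfl⟩⟩
  have hBbdd : BddBelow {L : ℝ | ∃ blk : ι → Fin (T + 1),
      Function.Surjective blk ∧ L = LTbound p X y (T + 1) blk} := by
    refine Set.Finite.bddBelow (Set.Finite.subset
      (Set.finite_range (LTbound p X y (T + 1))) ?_)
    rintro L ⟨b, -, rfl⟩
    exact Set.mem_range_self b
  rw [ge_iff_le]
  refine le_csInf hAne ?_
  rintro L ⟨blk, hsurjblk, rfl⟩
  obtain ⟨blk', hs', hle⟩ := LT_step p hp X y T blk hsurjblk hT
  exact le_trans (csInf_le hBbdd ⟨blk', hs', rfl⟩) hle
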